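/- Let x and y be two generators of an n×n grid that agree at n−2 points and differ at the four corners of an embedded rectangle r in the planar grid. Then for the Alexander grading A(x) = Σ_{p∈O∪X} J(x,p)·w(p)·ε(p) (with ε = +1 on X-markings and −1 on O-markings, and weights w(p) in an abelian group H), one has A(x) − A(y) = Σ_{p∈X∩r} w(p) − Σ_{p∈O∩r} w(p). -/
import Mathlib


/-!
STATEMENT 2: If generators x, y of an n×n grid agree at n−2 points and differ at the
four corners of an embedded rectangle r, then the Alexander grading
A(x) = Σ_{p∈O∪X} J(x,p) w(p) ε(p) (ε = +1 on X, −1 on O, weights in an abelian group H)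
satisfies A(x) − A(y) = Σ_{p∈X∩r} w(p) − Σ_{p∈O∩r} w(p).

Generators are modelled by permutations, the O's by a permutation ρ (the O in column i
is at (i+1/2, ρ i+1/2)), the X's by a finite set of squares `Xset` at half-integer
coordinates.  Since J takes half-integer values, H is taken to be a ℚ-module so that
the Alexander grading is defined (a priori it lives in ½H).
-/

noncomputable section
open Finset

attribute [local instance] Classical.propDecidable

def Ic (A B : Finset (ℝ × ℝ)) : ℕ :=
  ((A ×ˢ B).filter fun p => p.1.1 < p.2.1 ∧ p.1.2 < p.2.2).card

def Jc (A B : Finset (ℝ × ℝ)) : ℚ := ((Ic A B : ℚ) + (Ic B A : ℚ)) / 2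

def genPts {n : ℕ} (σ : Equiv.Perm (Fin n)) : Finset (ℝ × ℝ) :=
  Finset.univ.image fun i : Fin n => ((i.val : ℝ), ((σ i).val : ℝ))

/-- The point at the centre of the square `q`. -/
def markPt {n : ℕ} (q : Fin n × Fin n) : ℝ × ℝ :=
  ((q.1.val : ℝ) + 1/2, (q.2.val : ℝ) + 1/2)

/-- The Alexander grading `A(x) = Σ_{p ∈ O∪X} J(x,p)·w(p)·ε(p)`. -/
def Alex {n : ℕ} {H : Type*} [AddCommGroup H] [Module ℚ H]
    (σ ρ : Equiv.Perm (Fin n)) (Xset : Finset (Fin n × Fin n))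
    (wX : Fin n × Fin n → H) (wO : Fin n → H) : H :=
  (∑ q ∈ Xset, Jc (genPts σ) {markPt q} • wX q) -
    ∑ i : Fin n, Jc (genPts σ) {markPt (i, ρ i)} • wO i

lemma Ic_left {n : ℕ} (σ : Equiv.Perm (Fin n)) (q : Fin n × Fin n) :
    Ic (genPts σ) {markPt q} =
      (univ.filter fun i : Fin n => i ≤ q.1 ∧ σ i ≤ q.2).card := by
  unfold Ic genPts markPt
  rw [Finset.product_singleton, Finset.filter_map, Finset.card_map,
    Finset.filter_image, Finset.card_image_of_injective _ ?_]
  · congr 1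
    ext i
    simp only [Finset.mem_filter, Finset.mem_univ, true_and, Function.comp_apply,
      Function.Embedding.coeFn_mk]
    constructor
    · rintro ⟨h1, h2⟩
      refine ⟨?_, ?_⟩
      · have : (i : ℝ) ≤ (q.1 : ℝ) := by
          by_contra hh
          push_neg at hh
          have : ((q.1 : ℕ) : ℝ) + 1 ≤ i := by exact_mod_cast Nat.cast_lt.mp hh
          linarith
        exact_mod_cast this
      · have : ((σ i : ℕ) : ℝ) ≤ (q.2 : ℝ) := by
          by_contra hh
          push_neg at hh
          have : ((q.2 : ℕ) : ℝ) + 1 ≤ (σ i : ℕ) := by exact_mod_cast Nat.cast_lt.mp hh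
          linarith
        exact_mod_cast this
    · rintro ⟨h1, h2⟩
      have h1' : (i : ℝ) ≤ (q.1 : ℝ) := by exact_mod_cast h1
      have h2' : ((σ i : ℕ) : ℝ) ≤ (q.2 : ℝ) := by exact_mod_cast h2
      constructor <;> linarith
  · intro a b h
    have : ((a : ℕ) : ℝ) = ((b : ℕ) : ℝ) := congrArg (fun p => p.1) h
    exact Fin.ext (by exact_mod_cast this)

lemma Ic_right {n : ℕ} (σ : Equiv.Perm (Fin n)) (q : Fin n × Fin n) :
    Ic {markPt q} (genPts σ) =
      (univ.filter fun i : Fin n => q.1 < i ∧ q.2 < σ i).card := by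
  unfold Ic genPts markPt
  rw [Finset.singleton_product, Finset.filter_map, Finset.card_map,
    Finset.filter_image, Finset.card_image_of_injective _ ?_]
  · congr 1
    ext i
    simp only [Finset.mem_filter, Finset.mem_univ, true_and, Function.comp_apply,
      Function.Embedding.coeFn_mk]
    constructor
    · rintro ⟨h1, h2⟩
      refine ⟨?_, ?_⟩
      · have : ((q.1 : ℕ) : ℝ) < i := by linarith
        exact_mod_cast this
      · have : ((q.2 : ℕ) : ℝ) < (σ i : ℕ) := by linarith
        exact_mod_cast this
    · rintro ⟨h1, h2⟩
      have h1' : ((q.1 : ℕ) : ℝ) + 1 ≤ (i : ℝ) := by exact_mod_cast h1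
      have h2' : ((q.2 : ℕ) : ℝ) + 1 ≤ ((σ i : ℕ) : ℝ) := by exact_mod_cast h2
      constructor <;> linarith
  · intro a b h
    have : ((a : ℕ) : ℝ) = ((b : ℕ) : ℝ) := congrArg (fun p => p.1) h
    exact Fin.ext (by exact_mod_cast this)

lemma ind_alg (P Q R S : Prop) [Decidable P] [Decidable Q] [Decidable R] [Decidable S]
    (hPQ : Q → P) (hSR : S → R) :
    ((if P ∧ R then (1:ℚ) else 0) - (if P ∧ S then 1 else 0) +
      ((if Q ∧ S then 1 else 0) - (if Q ∧ R then 1 else 0))) +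
    ((if ¬P ∧ ¬R then (1:ℚ) else 0) - (if ¬P ∧ ¬S then 1 else 0) +
      ((if ¬Q ∧ ¬S then 1 else 0) - (if ¬Q ∧ ¬R then 1 else 0))) =
    (if P ∧ ¬Q ∧ R ∧ ¬S then 1 else 0) * 2 := by
  by_cases hP : P <;> by_cases hQ : Q <;> by_cases hR : R <;> by_cases hS : S <;>
    simp_all <;> norm_num

lemma Jdiff {n : ℕ} (σ : Equiv.Perm (Fin n)) (c₁ c₂ : Fin n)
    (hc : c₁ < c₂) (hr : σ c₁ < σ c₂) (q : Fin n × Fin n) :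
    Jc (genPts σ) {markPt q} - Jc (genPts (σ * Equiv.swap c₁ c₂)) {markPt q} =
      if c₁ ≤ q.1 ∧ q.1 < c₂ ∧ σ c₁ ≤ q.2 ∧ q.2 < σ c₂ then 1 else 0 := by
  set τ := σ * Equiv.swap c₁ c₂ with hτ
  have hτ1 : τ c₁ = σ c₂ := by simp [hτ, Equiv.Perm.mul_apply]
  have hτ2 : τ c₂ = σ c₁ := by simp [hτ, Equiv.Perm.mul_apply]
  have hτo : ∀ i : Fin n, i ≠ c₁ → i ≠ c₂ → τ i = σ i := by
    intro i h1 h2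
    simp [hτ, Equiv.Perm.mul_apply, Equiv.swap_apply_of_ne_of_ne h1 h2]
  unfold Jc
  rw [Ic_left, Ic_left, Ic_right, Ic_right, Finset.card_filter, Finset.card_filter,
    Finset.card_filter, Finset.card_filter]
  push_cast
  rw [div_sub_div_same, div_eq_iff (by norm_num : (2:ℚ) ≠ 0)]
  have hF : ∀ F G : Fin n → ℚ, (∀ i, i ≠ c₁ → i ≠ c₂ → F i = G i) →
      (∑ i : Fin n, F i) - (∑ i : Fin n, G i) =
        (F c₁ - G c₁) + (F c₂ - G c₂) := by
    intro F G h
    rw [← Finset.sum_sub_distrib]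
    rw [← Finset.sum_subset (Finset.subset_univ ({c₁, c₂} : Finset (Fin n)))
      (by intro i _ hi
          simp only [Finset.mem_insert, Finset.mem_singleton, not_or] at hi
          rw [h i hi.1 hi.2, sub_self])]
    rw [Finset.sum_pair hc.ne]
  have e1 := hF (fun i => if i ≤ q.1 ∧ σ i ≤ q.2 then (1:ℚ) else 0)
    (fun i => if i ≤ q.1 ∧ τ i ≤ q.2 then (1:ℚ) else 0)
    (fun i h1 h2 => by simp only [hτo i h1 h2])
  have e2 := hF (fun i => if q.1 < i ∧ q.2 < σ i then (1:ℚ) else 0)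
    (fun i => if q.1 < i ∧ q.2 < τ i then (1:ℚ) else 0)
    (fun i h1 h2 => by simp only [hτo i h1 h2])
  have rearr : ∀ a b c d : ℚ, a + b - (c + d) = (a - c) + (b - d) := by intros; ring
  rw [rearr, e1, e2]
  beta_reduce
  rw [hτ1, hτ2]
  have i12 : c₂ ≤ q.1 → c₁ ≤ q.1 := fun h => le_trans hc.le h
  have i34 : σ c₂ ≤ q.2 → σ c₁ ≤ q.2 := fun h => le_trans hr.le h
  clear e1 e2 hF hτo hτ1 hτ2 hτ
  clear_value τ
  clear τ
  simp only [← not_le]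
  exact ind_alg _ _ _ _ i12 i34

theorem stmt2 {n : ℕ} {H : Type*} [AddCommGroup H] [Module ℚ H]
    (σ τ ρ : Equiv.Perm (Fin n)) (Xset : Finset (Fin n × Fin n))
    (wX : Fin n × Fin n → H) (wO : Fin n → H)
    (c₁ c₂ : Fin n)
    -- r is the rectangle with corners (c₁, σ c₁), (c₂, σ c₂) (on x, lower-left and
    -- upper-right) and (c₁, σ c₂), (c₂, σ c₁) (on y); x and y agree elsewhere:
    (hc : c₁ < c₂) (hr : σ c₁ < σ c₂)
    (hτ : τ = σ * Equiv.swap c₁ c₂) :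
    Alex σ ρ Xset wX wO - Alex τ ρ Xset wX wO =
      (∑ q ∈ Xset.filter (fun q => c₁ ≤ q.1 ∧ q.1 < c₂ ∧ σ c₁ ≤ q.2 ∧ q.2 < σ c₂), wX q)
        - ∑ i ∈ Finset.univ.filter
            (fun i : Fin n => c₁ ≤ i ∧ i < c₂ ∧ σ c₁ ≤ ρ i ∧ ρ i < σ c₂), wO i := by
  subst hτ
  unfold Alex
  have rearr : ∀ a b c d : H, a - b - (c - d) = (a - c) - (b - d) := by
    intros; abel
  rw [rearr, ← Finset.sum_sub_distrib, ← Finset.sum_sub_distrib]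
  have key : ∀ q : Fin n × Fin n,
      Jc (genPts σ) {markPt q} • wX q -
        Jc (genPts (σ * Equiv.swap c₁ c₂)) {markPt q} • wX q =
      (if c₁ ≤ q.1 ∧ q.1 < c₂ ∧ σ c₁ ≤ q.2 ∧ q.2 < σ c₂ then wX q else 0) := by
    intro q
    rw [← sub_smul, Jdiff σ c₁ c₂ hc hr q, ite_smul, one_smul, zero_smul]
  have key2 : ∀ i : Fin n,
      Jc (genPts σ) {markPt (i, ρ i)} • wO i -
        Jc (genPts (σ * Equiv.swap c₁ c₂)) {markPt (i, ρ i)} • wO i =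
      (if c₁ ≤ i ∧ i < c₂ ∧ σ c₁ ≤ ρ i ∧ ρ i < σ c₂ then wO i else 0) := by
    intro i
    rw [← sub_smul, Jdiff σ c₁ c₂ hc hr (i, ρ i), ite_smul, one_smul, zero_smul]
  rw [Finset.sum_congr rfl (fun q _ => key q), Finset.sum_congr rfl (fun i _ => key2 i),
    ← Finset.sum_filter, ← Finset.sum_filter]
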